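/- arXiv:2405.16765 — 3 statements merged into one kernel-verified Lean document; each statement's English description precedes it below -/
import Mathlib

section
/- For real parameters λ>0, γ>0, η>0 and any complex number x, the Minimax Logarithmic Concave function φ(x), defined piecewise as λ·log(|x|/η + 1) − log²(|x|/η + 1)/(2γ) when |x| ≤ η·e^{γλ} − η, and γλ²/2 when |x| > η·e^{γλ} − η, equals the minimum over w ≥ 0 of the expression w·log(|x|/η + 1) + (γ/2)(w − λ)². -/
noncomputable def mlc (lam gam eta : ℝ) (x : ℂ) : ℝ :=
  if ‖x‖ ≤ eta * Real.exp (gam * lam) - eta then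
    lam * Real.log (‖x‖ / eta + 1) - (Real.log (‖x‖ / eta + 1)) ^ 2 / (2 * gam)
  else gam * lam ^ 2 / 2

theorem mlc_eq_min (lam gam eta : ℝ) (hlam : 0 < lam) (hgam : 0 < gam)
    (heta : 0 < eta) (x : ℂ) :
    IsLeast {v : ℝ | ∃ w : ℝ, 0 ≤ w ∧
        v = w * Real.log (‖x‖ / eta + 1) + gam / 2 * (w - lam) ^ 2}
      (mlc lam gam eta x) := by
  set n := ‖x‖ with hn
  have hn0 : 0 ≤ n := norm_nonneg x
  set L := Real.log (n / eta + 1) with hL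
  have hpos : (0:ℝ) < n / eta + 1 := by positivity
  have hL0 : 0 ≤ L := Real.log_nonneg (by
    have : 0 ≤ n / eta := by positivity
    linarith)
  have hiff : n ≤ eta * Real.exp (gam * lam) - eta ↔ L ≤ gam * lam := by
    rw [hL, Real.log_le_iff_le_exp hpos]
    constructor
    · intro h
      rw [div_add' _ _ _ heta.ne', div_le_iff₀ heta]
      nlinarith
    · intro h
      rw [div_add' _ _ _ heta.ne', div_le_iff₀ heta] at h
      nlinarith
  unfold mlc
  rw [← hn, ← hL]
  by_cases hc : n ≤ eta * Real.exp (gam * lam) - eta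
  · rw [if_pos hc]
    have hLg : L ≤ gam * lam := hiff.mp hc
    constructor
    · exact ⟨lam - L / gam, by
        constructor
        · have : L / gam ≤ lam := by
            rw [div_le_iff₀ hgam]; linarith [mul_comm gam lam]
          linarith
        · field_simp
          ring⟩
    · rintro v ⟨w, hw, rfl⟩
      have key : w * L + gam / 2 * (w - lam) ^ 2 - (lam * L - L ^ 2 / (2 * gam)) =
          gam / 2 * (w - lam + L / gam) ^ 2 := by
        field_simp
        ring
      nlinarith [sq_nonneg (w - lam + L / gam), hgam.le]
  · rw [if_neg hc]
    have hLg : gam * lam < L := by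
      by_contra h
      exact hc (hiff.mpr (le_of_not_gt h))
    constructor
    · exact ⟨0, le_refl 0, by ring⟩
    · rintro v ⟨w, hw, rfl⟩
      nlinarith [sq_nonneg w, mul_nonneg hw (le_of_lt (lt_of_le_of_lt (by positivity : (0:ℝ) ≤ gam*lam) hLg))]
end

section
/- The proximity operator of the MLC function equals a reweighted log proximity operator: for λ, γ, η, μ > 0 and c ∈ ℂ, argmin_x [μ·φ(x) + (1/2)|x − c|²] = argmin_x [μ·w*(x̂)·log(|x|/η + 1) + (1/2)|x − c|²] evaluated with the optimal weight w* = max{λ − log(|x̂|/η + 1)/γ, 0} at the minimizer x̂, i.e., any minimizer x̂ of the first problem is also a minimizer of the second problem with weight w*(x̂). -/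
lemma mlc_cond_iff (lam gam eta : ℝ) (hgam : 0 < gam) (hlam : 0 < lam)
    (heta : 0 < eta) (x : ℂ) :
    (‖x‖ ≤ eta * Real.exp (gam * lam) - eta) ↔
      Real.log (‖x‖ / eta + 1) ≤ gam * lam := by
  have hpos : (0:ℝ) < ‖x‖ / eta + 1 := by positivity
  rw [Real.log_le_iff_le_exp hpos, div_add' _ _ _ (ne_of_gt heta),
    div_le_iff₀ heta]
  constructor <;> intro h <;> nlinarith

lemma mlc_le (lam gam eta : ℝ) (hlam : 0 < lam) (hgam : 0 < gam)
    (heta : 0 < eta) (x : ℂ) (w : ℝ) (hw : 0 ≤ w) :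
    mlc lam gam eta x ≤
      w * Real.log (‖x‖ / eta + 1) + gam / 2 * (w - lam) ^ 2 := by
  set L := Real.log (‖x‖ / eta + 1) with hL
  unfold mlc
  by_cases h : L ≤ gam * lam
  · rw [if_pos ((mlc_cond_iff lam gam eta hgam hlam heta x).mpr h), ← hL]
    have key : w * L + gam / 2 * (w - lam) ^ 2 - (lam * L - L ^ 2 / (2 * gam))
        = gam / 2 * (w - lam + L / gam) ^ 2 := by
      field_simp
      ring
    nlinarith [sq_nonneg (w - lam + L / gam)]
  · push_neg at h
    rw [if_neg (fun hc => absurd ((mlc_cond_iff lam gam eta hgam hlam heta x).mp hc) (not_le.mpr h))]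
    nlinarith [mul_nonneg hw (le_of_lt (sub_pos.mpr h)), sq_nonneg w]

lemma mlc_eq (lam gam eta : ℝ) (hlam : 0 < lam) (hgam : 0 < gam)
    (heta : 0 < eta) (x : ℂ) :
    mlc lam gam eta x =
      (max (lam - Real.log (‖x‖ / eta + 1) / gam) 0) * Real.log (‖x‖ / eta + 1)
        + gam / 2 * ((max (lam - Real.log (‖x‖ / eta + 1) / gam) 0) - lam) ^ 2 := by
  set L := Real.log (‖x‖ / eta + 1) with hL
  unfold mlc
  by_cases h : L ≤ gam * lam
  · rw [if_pos ((mlc_cond_iff lam gam eta hgam hlam heta x).mpr h), ← hL]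
    have hmax : max (lam - L / gam) 0 = lam - L / gam := by
      apply max_eq_left
      rw [sub_nonneg, div_le_iff₀ hgam]
      nlinarith
    rw [hmax]
    field_simp
    ring
  · push_neg at h
    rw [if_neg (fun hc => absurd ((mlc_cond_iff lam gam eta hgam hlam heta x).mp hc) (not_le.mpr h))]
    have hmax : max (lam - L / gam) 0 = 0 := by
      apply max_eq_right
      rw [sub_nonpos, le_div_iff₀ hgam]
      nlinarith
    rw [hmax]
    ring

theorem mlc_prox_eq_weighted_log_prox (lam gam eta mu : ℝ) (hlam : 0 < lam)
    (hgam : 0 < gam) (heta : 0 < eta) (hmu : 0 < mu) (c : ℂ) (xhat : ℂ)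
    (hmin : ∀ y : ℂ,
      mu * mlc lam gam eta xhat + (1 / 2) * ‖xhat - c‖ ^ 2 ≤
        mu * mlc lam gam eta y + (1 / 2) * ‖y - c‖ ^ 2) :
    let wstar : ℝ := max (lam - Real.log (‖xhat‖ / eta + 1) / gam) 0
    ∀ y : ℂ,
      mu * wstar * Real.log (‖xhat‖ / eta + 1) + (1 / 2) * ‖xhat - c‖ ^ 2 ≤
        mu * wstar * Real.log (‖y‖ / eta + 1) + (1 / 2) * ‖y - c‖ ^ 2 := by
  intro wstar y
  have hw : (0:ℝ) ≤ wstar := le_max_right _ _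
  have heq := mlc_eq lam gam eta hlam hgam heta xhat
  have hle := mlc_le lam gam eta hlam hgam heta y wstar hw
  have h1 := hmin y
  have h2 : mu * mlc lam gam eta y ≤
      mu * (wstar * Real.log (‖y‖ / eta + 1) + gam / 2 * (wstar - lam) ^ 2) :=
    mul_le_mul_of_nonneg_left hle (le_of_lt hmu)
  rw [heq] at h1
  nlinarith
end

section
/- The function t ↦ λ·log(t/η + 1) − log²(t/η + 1)/(2γ) is concave on [0, η·e^{γλ} − η] for λ, γ, η > 0; hence the MLC function φ, viewed as a function of the modulus |x|, is concave on the interval where its first branch applies. -/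
theorem mlc_branch_concave (lam gam eta : ℝ) (hlam : 0 < lam) (hgam : 0 < gam)
    (heta : 0 < eta) :
    ConcaveOn ℝ (Set.Icc 0 (eta * Real.exp (gam * lam) - eta))
      (fun t : ℝ =>
        lam * Real.log (t / eta + 1) - (Real.log (t / eta + 1)) ^ 2 / (2 * gam)) := by
  set T : ℝ := eta * Real.exp (gam * lam) - eta with hT
  have hexp : 1 < Real.exp (gam * lam) := by
    have h0 : 0 < gam * lam := mul_pos hgam hlam
    have := Real.add_one_le_exp (gam * lam)
    linarith
  have hTpos : 0 < T := by
    have : eta * 1 < eta * Real.exp (gam * lam) := by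
      exact (mul_lt_mul_iff_right₀ heta).2 hexp
    simp only [hT]; linarith
  have hint : interior (Set.Icc (0:ℝ) T) = Set.Ioo 0 T := interior_Icc
  refine concaveOn_of_hasDerivWithinAt2_nonpos (f' := fun x =>
      (lam - Real.log (x / eta + 1) / gam) * (x + eta)⁻¹)
    (f'' := fun x => (Real.log (x / eta + 1) / gam - lam - 1 / gam) / (x + eta) ^ 2)
    (convex_Icc _ _) ?_ ?_ ?_ ?_
  · -- continuity
    have harg : ContinuousOn (fun t : ℝ => t / eta + 1) (Set.Icc 0 T) :=
      ((continuousOn_id.div_const eta).add continuousOn_const)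
    have hlog : ContinuousOn (fun t : ℝ => Real.log (t / eta + 1)) (Set.Icc 0 T) := by
      apply Real.continuousOn_log.comp harg
      intro x hx
      have : 0 ≤ x := hx.1
      have : (0:ℝ) < x / eta + 1 := by positivity
      simp [Set.mem_compl_iff, this.ne']
    exact ((hlog.const_smul lam).sub (((hlog.pow 2)).div_const (2 * gam))).congr
      (fun x _ => by simp [smul_eq_mul])
  · -- first derivative
    rw [hint]
    intro x hx
    have hx0 : 0 < x := hx.1
    have hxe : 0 < x + eta := by linarith
    have hu : 0 < x / eta + 1 := by positivity
    have hL : HasDerivAt (fun t : ℝ => Real.log (t / eta + 1)) ((x + eta)⁻¹) x := by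
      have h1 : HasDerivAt (fun t : ℝ => t / eta + 1) (1 / eta) x :=
        ((hasDerivAt_id x).div_const eta).add_const 1
      have := h1.log hu.ne'
      convert this using 1
      field_simp
    have H : HasDerivAt (fun t : ℝ =>
        lam * Real.log (t / eta + 1) - (Real.log (t / eta + 1)) ^ 2 / (2 * gam))
        (lam * (x + eta)⁻¹ - 2 * Real.log (x / eta + 1) ^ 1 * (x + eta)⁻¹ / (2 * gam)) x :=
      (hL.const_mul lam).sub ((hL.pow 2).div_const (2 * gam))
    have heq : (lam - Real.log (x / eta + 1) / gam) * (x + eta)⁻¹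
        = lam * (x + eta)⁻¹ - 2 * Real.log (x / eta + 1) ^ 1 * (x + eta)⁻¹ / (2 * gam) := by
      field_simp
    exact (heq ▸ H).hasDerivWithinAt
  · -- second derivative
    rw [hint]
    intro x hx
    have hx0 : 0 < x := hx.1
    have hxe : 0 < x + eta := by linarith
    have hu : 0 < x / eta + 1 := by positivity
    have hL : HasDerivAt (fun t : ℝ => Real.log (t / eta + 1)) ((x + eta)⁻¹) x := by
      have h1 : HasDerivAt (fun t : ℝ => t / eta + 1) (1 / eta) x :=
        ((hasDerivAt_id x).div_const eta).add_const 1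
      have := h1.log hu.ne'
      convert this using 1
      field_simp
    have hA : HasDerivAt (fun t : ℝ => lam - Real.log (t / eta + 1) / gam)
        (-((x + eta)⁻¹ / gam)) x := by
      simpa using (hL.div_const gam).const_sub lam
    have hB : HasDerivAt (fun t : ℝ => (t + eta)⁻¹) (-1 / (x + eta) ^ 2) x := by
      have h1 : HasDerivAt (fun t : ℝ => t + eta) 1 x := (hasDerivAt_id x).add_const eta
      have h2 : HasDerivAt (fun t : ℝ => t + eta)⁻¹ (-1 / (x + eta) ^ 2) x := by
        simpa using h1.inv hxe.ne'
      exact h2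
    have H := hA.mul hB
    have heq : (Real.log (x / eta + 1) / gam - lam - 1 / gam) / (x + eta) ^ 2
        = -((x + eta)⁻¹ / gam) * (x + eta)⁻¹ +
          (lam - Real.log (x / eta + 1) / gam) * (-1 / (x + eta) ^ 2) := by
      field_simp
      ring
    exact (heq ▸ H).hasDerivWithinAt
  · -- sign
    rw [hint]
    intro x hx
    have hx0 : 0 < x := hx.1
    have hxT : x < T := hx.2
    have hxe : 0 < x + eta := by linarith
    have hu : 0 < x / eta + 1 := by positivity
    have hlog : Real.log (x / eta + 1) < gam * lam := by
      have h3 : x / eta + 1 < Real.exp (gam * lam) := by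
        rw [div_add' _ _ _ heta.ne', div_lt_iff₀ heta]
        rw [hT] at hxT
        linarith
      have := Real.log_lt_log hu h3
      simpa [Real.log_exp] using this
    have hnum : Real.log (x / eta + 1) / gam - lam - 1 / gam ≤ 0 := by
      have h1 : Real.log (x / eta + 1) / gam < lam := by
        rw [div_lt_iff₀ hgam]; linarith [hlog]
      have h2 : 0 < 1 / gam := by positivity
      linarith
    exact div_nonpos_of_nonpos_of_nonneg hnum (by positivity)
end
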